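/- Let ν ≥ 0 be real. Then for all x > 0 one has the Turán type inequality I_ν(x)² − I_{ν−1}(x)·I_{ν+1}(x) < (2/(x + ν)) · I_ν(x)². -/

import Mathlib

open Real

/-- The modified Bessel function of the first kind of real order `ν`,
`I_ν(x) = ∑_{n≥0} (x/2)^(2n+ν) / (n! Γ(n+ν+1))`. -/
noncomputable def besselI (ν x : ℝ) : ℝ :=
  ∑' n : ℕ, (x / 2) ^ (2 * (n : ℝ) + ν) / ((n.factorial : ℝ) * Real.Gamma ((n : ℝ) + ν + 1))

/-- The modified Bessel function of the second kind of real order `ν`,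
`K_ν(x) = ∫_0^∞ e^{-x cosh t} cosh(ν t) dt`. -/
noncomputable def besselK (ν x : ℝ) : ℝ :=
  ∫ t in Set.Ioi (0 : ℝ), Real.exp (-x * Real.cosh t) * Real.cosh (ν * t)


section TuranAuxSection
open Finset Filter

namespace TuranBesselAux


/-- Falling factorial with real argument. -/
noncomputable def ff (a : ℝ) : ℕ → ℝ
  | 0 => 1
  | n + 1 => ff a n * (a - n)

@[simp] lemma ff_zero (a : ℝ) : ff a 0 = 1 := rfl

lemma ff_succ (a : ℝ) (n : ℕ) : ff a (n + 1) = ff a n * (a - n) := rfl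

lemma ff_pos {a : ℝ} {n : ℕ} (h : ∀ j : ℕ, j < n → 0 < a - j) : 0 < ff a n := by
  induction n with
  | zero => norm_num [ff]
  | succ m ih =>
      rw [ff_succ]
      exact mul_pos (ih fun j hj => h j (hj.trans (Nat.lt_succ_self m)))
        (h m (Nat.lt_succ_self m))

/-- Vandermonde convolution for falling factorials. -/
lemma ff_vandermonde (a b : ℝ) (n : ℕ) :
    ff (a + b) n = ∑ k ∈ Finset.range (n + 1), (n.choose k : ℝ) * ff a k * ff b (n - k) := by
  induction n with
  | zero => simp [ff]
  | succ m ih =>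
      have key : ∀ k ∈ Finset.range (m + 1),
          (m.choose k : ℝ) * ff a k * ff b (m - k) * (a + b - m)
            = (m.choose k : ℝ) * ff a (k + 1) * ff b (m - k)
              + (m.choose k : ℝ) * ff a k * ff b (m - k + 1) := by
        intro k hk
        have hk' : k ≤ m := Nat.lt_succ_iff.mp (Finset.mem_range.mp hk)
        have hcast : ((m - k : ℕ) : ℝ) = (m : ℝ) - k := by
          push_cast [Nat.cast_sub hk']; ring
        rw [ff_succ, ff_succ, hcast]
        ring
      have lhs_eq : ff (a + b) (m + 1)
          = ∑ k ∈ Finset.range (m + 1),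
              ((m.choose k : ℝ) * ff a (k + 1) * ff b (m - k)
                + (m.choose k : ℝ) * ff a k * ff b (m - k + 1)) := by
        rw [ff_succ, ih, Finset.sum_mul]
        exact Finset.sum_congr rfl key
      have hR : ∑ k ∈ Finset.range (m + 1 + 1),
          ((m+1).choose k : ℝ) * ff a k * ff b (m + 1 - k)
          = (∑ k ∈ Finset.range (m + 1), (m.choose k : ℝ) * ff a (k+1) * ff b (m - k))
            + ((∑ k ∈ Finset.range (m + 1), (m.choose (k+1) : ℝ) * ff a (k+1) * ff b (m - k))
              + ff b (m + 1)) := by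
        rw [Finset.sum_range_succ'
          (fun k => ((m+1).choose k : ℝ) * ff a k * ff b (m + 1 - k)) (m+1)]
        have h1 : ∀ k ∈ Finset.range (m + 1),
            (((m+1).choose (k+1) : ℝ)) * ff a (k+1) * ff b (m + 1 - (k+1))
              = (m.choose k : ℝ) * ff a (k+1) * ff b (m - k)
                + (m.choose (k+1) : ℝ) * ff a (k+1) * ff b (m - k) := by
          intro k hk
          have : m + 1 - (k + 1) = m - k := by omega
          rw [this, Nat.choose_succ_succ]
          push_cast
          ring
        rw [Finset.sum_congr rfl h1, Finset.sum_add_distrib]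
        simp only [ff, Nat.choose_zero_right, Nat.cast_one, one_mul, mul_one, Nat.sub_zero]
        ring
      have h4 : ∑ k ∈ Finset.range (m + 1), (m.choose k : ℝ) * ff a k * ff b (m - k + 1)
          = (∑ k ∈ Finset.range (m + 1), (m.choose (k+1) : ℝ) * ff a (k+1) * ff b (m - k))
            + ff b (m + 1) := by
        rw [Finset.sum_range_succ'
          (fun k => ((m.choose k : ℝ)) * ff a k * ff b (m - k + 1)) m]
        have h2 : ∀ k ∈ Finset.range m,
            ((m.choose (k+1) : ℝ)) * ff a (k+1) * ff b (m - (k+1) + 1)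
              = (m.choose (k+1) : ℝ) * ff a (k+1) * ff b (m - k) := by
          intro k hk
          have : m - (k + 1) + 1 = m - k := by
            have := Finset.mem_range.mp hk; omega
          rw [this]
        rw [Finset.sum_congr rfl h2]
        have h3 : ∑ k ∈ Finset.range (m+1), ((m.choose (k+1) : ℝ)) * ff a (k+1) * ff b (m - k)
            = ∑ k ∈ Finset.range m, ((m.choose (k+1) : ℝ)) * ff a (k+1) * ff b (m - k) := by
          rw [Finset.sum_range_succ, Nat.choose_succ_self]
          norm_num
        rw [h3]
        simp [ff]
      rw [lhs_eq, Finset.sum_add_distrib, h4, hR]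

/-- `Γ(s + m) = ff (s + m - 1) m * Γ s` for `s > 0`. -/
lemma Gamma_ff (m : ℕ) : ∀ s : ℝ, 0 < s →
    Real.Gamma (s + m) = ff (s + m - 1) m * Real.Gamma s := by
  induction m with
  | zero => intro s _; simp [ff]
  | succ m ih =>
      intro s hs
      have h1 : s + ((m + 1 : ℕ) : ℝ) = (s + 1) + m := by push_cast; ring
      rw [h1, ih (s + 1) (by linarith), Real.Gamma_add_one hs.ne']
      have h3 : s + 1 + (m : ℝ) - 1 = s + m := by ring
      rw [h3, ff_succ]
      ring



lemma Gamma_nat_add_nonneg {c : ℝ} (hc : 0 ≤ c) (n : ℕ) : 0 ≤ Real.Gamma ((n : ℝ) + c) :=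
  Real.Gamma_nonneg_of_nonneg (by positivity)

lemma term_nonneg {y c : ℝ} (hy : 0 ≤ y) (hc : 0 ≤ c) (n : ℕ) :
    0 ≤ y ^ n / ((n.factorial : ℝ) * Real.Gamma ((n : ℝ) + c)) := by
  have := Gamma_nat_add_nonneg hc n
  positivity

lemma summable_T {y c : ℝ} (hy : 0 ≤ y) (hc : 0 ≤ c) :
    Summable (fun n : ℕ => y ^ n / ((n.factorial : ℝ) * Real.Gamma ((n : ℝ) + c))) := by
  apply summable_of_ratio_norm_eventually_le (r := 1/2) (by norm_num)
  filter_upwards [eventually_ge_atTop (max 1 ⌈2 * y⌉₊)] with n hn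
  have hn1 : (1 : ℕ) ≤ n := le_trans (le_max_left _ _) hn
  have hny : 2 * y ≤ (n : ℝ) := by
    calc 2 * y ≤ (⌈2 * y⌉₊ : ℝ) := Nat.le_ceil _
    _ ≤ (n : ℝ) := by exact_mod_cast le_trans (le_max_right _ _) hn
  have hnc : (0 : ℝ) < (n : ℝ) + c := by
    have : (1 : ℝ) ≤ (n : ℝ) := by exact_mod_cast hn1
    linarith
  have hG : 0 < Real.Gamma ((n : ℝ) + c) := Real.Gamma_pos_of_pos hnc
  have hstep : Real.Gamma ((n + 1 : ℕ) + c) = ((n : ℝ) + c) * Real.Gamma ((n : ℝ) + c) := by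
    have : ((n + 1 : ℕ) : ℝ) + c = ((n : ℝ) + c) + 1 := by push_cast; ring
    rw [this, Real.Gamma_add_one hnc.ne']
  rw [Real.norm_eq_abs, Real.norm_eq_abs, abs_of_nonneg (term_nonneg hy hc _),
    abs_of_nonneg (term_nonneg hy hc _), hstep]
  have hfpos : (0 : ℝ) < (n.factorial : ℝ) := by positivity
  have heq : y ^ (n + 1) / (((n+1).factorial : ℝ) * (((n : ℝ) + c) * Real.Gamma ((n : ℝ) + c)))
      = (y / (((n:ℝ) + 1) * ((n:ℝ) + c))) * (y ^ n / ((n.factorial : ℝ) * Real.Gamma ((n : ℝ) + c))) := by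
    rw [Nat.factorial_succ]
    push_cast
    rw [pow_succ]
    field_simp
  rw [heq]
  apply mul_le_mul_of_nonneg_right _ (term_nonneg hy hc n)
  rw [div_le_iff₀ (by positivity)]
  have hn1' : (1 : ℝ) ≤ (n : ℝ) := by exact_mod_cast hn1
  nlinarith
noncomputable def T (c y : ℝ) : ℝ :=
  ∑' n : ℕ, y ^ n / ((n.factorial : ℝ) * Real.Gamma ((n : ℝ) + c))

lemma besselI_eq {x : ℝ} (hx : 0 < x) (μ : ℝ) :
    besselI μ x = (x / 2) ^ μ * T (μ + 1) ((x / 2) ^ 2) := by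
  have hx2 : (0 : ℝ) < x / 2 := by linarith
  rw [besselI, T, ← tsum_mul_left]
  congr 1
  ext n
  have h1 : (x / 2) ^ (2 * (n : ℝ) + μ) = (x / 2) ^ μ * ((x / 2) ^ 2) ^ n := by
    rw [Real.rpow_add hx2]
    rw [mul_comm]
    congr 1
    have : (2 : ℝ) * (n : ℝ) = ((2 * n : ℕ) : ℝ) := by push_cast; ring
    rw [this, Real.rpow_natCast, pow_mul]
  rw [h1]
  have h2 : (n : ℝ) + μ + 1 = (n : ℝ) + (μ + 1) := by ring
  rw [h2, mul_div_assoc]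

lemma T_pos {c y : ℝ} (hc : 0 < c) (hy : 0 ≤ y) : 0 < T c y := by
  apply Summable.tsum_pos (summable_T hy hc.le) (term_nonneg hy hc.le) 0
  simp only [pow_zero, Nat.factorial_zero, Nat.cast_one, Nat.cast_zero, one_mul, zero_add]
  exact div_pos one_pos (Real.Gamma_pos_of_pos hc)

lemma besselI_pos {μ x : ℝ} (hμ : 0 ≤ μ) (hx : 0 < x) : 0 < besselI μ x := by
  rw [besselI_eq hx]
  have hx2 : (0 : ℝ) < x / 2 := by linarith
  exact mul_pos (Real.rpow_pos_of_pos hx2 μ) (T_pos (by linarith) (by positivity))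

lemma T_rec {ν y : ℝ} (hν : 0 ≤ ν) (hy : 0 ≤ y) :
    T ν y = y * T (ν + 2) y + ν * T (ν + 1) y := by
  have hsum1 : Summable (fun n : ℕ => y ^ n / ((n.factorial : ℝ) * Real.Gamma ((n : ℝ) + (ν+1)))) :=
    summable_T hy (by linarith)
  have hsum2 : Summable (fun n : ℕ => y ^ n / ((n.factorial : ℝ) * Real.Gamma ((n : ℝ) + (ν+2)))) :=
    summable_T hy (by linarith)
  -- the sequence with the extra factor n
  set g : ℕ → ℝ := fun n => (n : ℝ) * (y ^ n / ((n.factorial : ℝ) * Real.Gamma ((n : ℝ) + (ν+1)))) with hg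
  have hgsucc : ∀ n : ℕ, g (n + 1)
      = y * (y ^ n / ((n.factorial : ℝ) * Real.Gamma ((n : ℝ) + (ν+2)))) := by
    intro n
    have hG : Real.Gamma (((n+1 : ℕ) : ℝ) + (ν+1)) = Real.Gamma ((n : ℝ) + (ν+2)) := by
      congr 1; push_cast; ring
    rw [hg]
    simp only
    rw [hG, Nat.factorial_succ]
    push_cast
    rw [pow_succ]
    have hGpos : 0 < Real.Gamma ((n : ℝ) + (ν+2)) := Real.Gamma_pos_of_pos (by positivity)
    have hf : (0:ℝ) < (n.factorial : ℝ) := by positivity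
    field_simp
  have hgsum : Summable g := by
    rw [← summable_nat_add_iff 1]
    exact (summable_congr (fun n => (hgsucc n))).mpr (hsum2.mul_left y)
  have hterm : ∀ n : ℕ, y ^ n / ((n.factorial : ℝ) * Real.Gamma ((n : ℝ) + ν))
      = g n + ν * (y ^ n / ((n.factorial : ℝ) * Real.Gamma ((n : ℝ) + (ν+1)))) := by
    intro n
    rcases eq_or_lt_of_le (by positivity : (0:ℝ) ≤ (n : ℝ) + ν) with h0 | hpos
    · -- n = 0 and ν = 0
      have hn0 : (n : ℝ) = 0 := by nlinarith [Nat.cast_nonneg (α := ℝ) n]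
      have hν0 : ν = 0 := by nlinarith [Nat.cast_nonneg (α := ℝ) n]
      have hn0' : n = 0 := by exact_mod_cast hn0
      subst hn0'
      rw [hg]
      simp [hν0, Real.Gamma_zero]
    · have hG1 : Real.Gamma ((n : ℝ) + (ν+1)) = ((n : ℝ) + ν) * Real.Gamma ((n : ℝ) + ν) := by
        have : (n : ℝ) + (ν + 1) = ((n : ℝ) + ν) + 1 := by ring
        rw [this, Real.Gamma_add_one hpos.ne']
      have hGpos : 0 < Real.Gamma ((n : ℝ) + ν) := Real.Gamma_pos_of_pos hpos
      have hf : (0:ℝ) < (n.factorial : ℝ) := by positivity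
      rw [hg]
      simp only
      rw [hG1]
      field_simp
  have hT : T ν y = (∑' n, g n) + ν * T (ν + 1) y := by
    rw [T]
    rw [tsum_congr hterm]
    rw [Summable.tsum_add hgsum (hsum1.mul_left ν), tsum_mul_left]
    rfl
  have hshift : (∑' n, g n) = y * T (ν + 2) y := by
    rw [Summable.tsum_eq_zero_add hgsum]
    have hg0 : g 0 = 0 := by rw [hg]; simp
    rw [hg0, zero_add, tsum_congr hgsucc, tsum_mul_left]
    rfl
  rw [hT, hshift]

lemma besselI_rec {ν x : ℝ} (hν : 0 ≤ ν) (hx : 0 < x) :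
    besselI (ν - 1) x = besselI (ν + 1) x + 2 * ν / x * besselI ν x := by
  have hx2 : (0 : ℝ) < x / 2 := by linarith
  have hy : (0:ℝ) ≤ (x/2)^2 := by positivity
  rw [besselI_eq hx, besselI_eq hx, besselI_eq hx]
  have e1 : ν - 1 + 1 = ν := by ring
  rw [e1]
  rw [T_rec hν hy]
  have e2 : (x/2) ^ (ν+1) = (x/2) ^ (ν-1) * (x/2)^2 := by
    rw [← Real.rpow_natCast (x/2) 2, ← Real.rpow_add hx2]
    congr 1
    push_cast
    ring
  have e3 : (x/2) ^ ν = (x/2) ^ (ν-1) * (x/2) := by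
    nth_rewrite 1 [show ν = (ν - 1) + 1 by ring]
    rw [Real.rpow_add hx2, Real.rpow_one]
  rw [e2, e3]
  have e4 : ν + 1 + 1 = ν + 2 := by ring
  rw [e4]
  field_simp


lemma cauchy_coeff_eq {c d : ℝ} (hc : 0 < c) (hd : 0 < d) {y : ℝ} (hy : 0 ≤ y) (n : ℕ) :
    ∑ k ∈ Finset.range (n + 1),
        (y ^ k / ((k.factorial : ℝ) * Real.Gamma ((k : ℝ) + c)))
          * (y ^ (n - k) / (((n - k).factorial : ℝ) * Real.Gamma (((n - k : ℕ) : ℝ) + d)))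
      = y ^ n * (ff (2 * (n : ℝ) + c + d - 2) n
          / ((n.factorial : ℝ) * (Real.Gamma ((n : ℝ) + c) * Real.Gamma ((n : ℝ) + d)))) := by
  have key : ∀ k ∈ Finset.range (n + 1),
      (y ^ k / ((k.factorial : ℝ) * Real.Gamma ((k : ℝ) + c)))
        * (y ^ (n - k) / (((n - k).factorial : ℝ) * Real.Gamma (((n - k : ℕ) : ℝ) + d)))
      = (n.choose k : ℝ) * ff ((n : ℝ) + d - 1) k * ff ((n : ℝ) + c - 1) (n - k)
          * (y ^ n / ((n.factorial : ℝ)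
            * (Real.Gamma ((n : ℝ) + c) * Real.Gamma ((n : ℝ) + d)))) := by
    intro k hk
    have hk' : k ≤ n := Nat.lt_succ_iff.mp (Finset.mem_range.mp hk)
    have hcast : ((n - k : ℕ) : ℝ) = (n : ℝ) - k := by
      push_cast [Nat.cast_sub hk']; ring
    have hGc : Real.Gamma ((n : ℝ) + c)
        = ff ((n : ℝ) + c - 1) (n - k) * Real.Gamma ((k : ℝ) + c) := by
      have h1 : (n : ℝ) + c = ((k : ℝ) + c) + ((n - k : ℕ) : ℝ) := by rw [hcast]; ring
      have h2 := Gamma_ff (n - k) ((k : ℝ) + c) (by positivity)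
      rw [h1, h2, hcast]
    have hGd : Real.Gamma ((n : ℝ) + d)
        = ff ((n : ℝ) + d - 1) k * Real.Gamma (((n - k : ℕ) : ℝ) + d) := by
      have h1 : (n : ℝ) + d = (((n - k : ℕ) : ℝ) + d) + (k : ℝ) := by rw [hcast]; ring
      have h2 := Gamma_ff k (((n - k : ℕ) : ℝ) + d) (by positivity)
      rw [h1, h2, hcast]
    have hchoose : (n.factorial : ℝ) = (n.choose k : ℝ) * (k.factorial : ℝ) * ((n - k).factorial : ℝ) := by
      rw [← Nat.choose_mul_factorial_mul_factorial hk']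
      push_cast
      ring
    have hyn : y ^ n = y ^ k * y ^ (n - k) := by
      rw [← pow_add]
      congr 1
      omega
    have hGkc : (0:ℝ) < Real.Gamma ((k : ℝ) + c) := Real.Gamma_pos_of_pos (by positivity)
    have hGkd : (0:ℝ) < Real.Gamma (((n - k : ℕ) : ℝ) + d) := Real.Gamma_pos_of_pos (by positivity)
    have hffc : 0 < ff ((n : ℝ) + c - 1) (n - k) := by
      apply ff_pos
      intro j hj
      have hj' : (j : ℝ) ≤ (n - k : ℕ) - 1 := by
        have : j + 1 ≤ n - k := hj
        have := (Nat.cast_le (α := ℝ)).mpr this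
        push_cast at this ⊢
        linarith
      have : ((n - k : ℕ) : ℝ) ≤ n := by
        have := Nat.sub_le n k
        exact_mod_cast this
      linarith
    have hffd : 0 < ff ((n : ℝ) + d - 1) k := by
      apply ff_pos
      intro j hj
      have hj' : (j : ℝ) ≤ (k : ℝ) - 1 := by
        have : j + 1 ≤ k := hj
        have := (Nat.cast_le (α := ℝ)).mpr this
        push_cast at this ⊢
        linarith
      have : (k : ℝ) ≤ n := by exact_mod_cast hk'
      linarith
    have hkf : (0:ℝ) < (k.factorial : ℝ) := by positivity
    have hnkf : (0:ℝ) < ((n - k).factorial : ℝ) := by positivity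
    have hch : (0:ℝ) < (n.choose k : ℝ) := by exact_mod_cast Nat.choose_pos hk'
    have hGnc : (0:ℝ) < Real.Gamma ((n : ℝ) + c) := Real.Gamma_pos_of_pos (by positivity)
    have hGnd : (0:ℝ) < Real.Gamma ((n : ℝ) + d) := Real.Gamma_pos_of_pos (by positivity)
    have hnf : (0:ℝ) < (n.factorial : ℝ) := by positivity
    rw [div_mul_div_comm, mul_div_assoc']
    rw [div_eq_div_iff
      (by exact (mul_pos (mul_pos hkf hGkc) (mul_pos hnkf hGkd)).ne')
      (by exact (mul_pos hnf (mul_pos hGnc hGnd)).ne')]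
    rw [hGc, hGd, hchoose, hyn]
    ring
  rw [Finset.sum_congr rfl key, ← Finset.sum_mul]
  have hvan := ff_vandermonde ((n : ℝ) + d - 1) ((n : ℝ) + c - 1) n
  have harg : (n : ℝ) + d - 1 + ((n : ℝ) + c - 1) = 2 * (n : ℝ) + c + d - 2 := by ring
  rw [harg] at hvan
  rw [← hvan]
  ring

lemma turan_strict {μ x : ℝ} (hμ : 0 < μ) (hx : 0 < x) :
    besselI (μ - 1) x * besselI (μ + 1) x < besselI μ x ^ 2 := by
  have hx2 : (0 : ℝ) < x / 2 := by linarith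
  set y : ℝ := (x / 2) ^ 2 with hy_def
  have hy : (0 : ℝ) < y := by positivity
  rw [besselI_eq hx, besselI_eq hx, besselI_eq hx]
  have e1 : μ - 1 + 1 = μ := by ring
  have e2 : μ + 1 + 1 = μ + 2 := by ring
  rw [e1, e2]
  have hpow : (x / 2) ^ (μ - 1) * (x / 2) ^ (μ + 1) = ((x / 2) ^ μ) ^ 2 := by
    rw [sq, ← Real.rpow_add hx2, ← Real.rpow_add hx2]
    congr 1
    ring
  have hmain : T μ y * T (μ + 2) y < T (μ + 1) y ^ 2 := by
    set b : ℕ → ℝ := fun n => y ^ n / ((n.factorial : ℝ) * Real.Gamma ((n : ℝ) + μ)) with hb_def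
    set c : ℕ → ℝ := fun n => y ^ n / ((n.factorial : ℝ) * Real.Gamma ((n : ℝ) + (μ + 2))) with hc_def
    set a : ℕ → ℝ := fun n => y ^ n / ((n.factorial : ℝ) * Real.Gamma ((n : ℝ) + (μ + 1))) with ha_def
    have hbn : ∀ n, 0 ≤ b n := term_nonneg hy.le hμ.le
    have hcn : ∀ n, 0 ≤ c n := term_nonneg hy.le (by linarith)
    have han : ∀ n, 0 ≤ a n := term_nonneg hy.le (by linarith)
    have hbs : Summable fun n => ‖b n‖ :=
      (summable_T hy.le hμ.le).congr fun n => (Real.norm_of_nonneg (hbn n)).symm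
    have hcs : Summable fun n => ‖c n‖ :=
      (summable_T hy.le (by linarith)).congr fun n => (Real.norm_of_nonneg (hcn n)).symm
    have has : Summable fun n => ‖a n‖ :=
      (summable_T hy.le (by linarith)).congr fun n => (Real.norm_of_nonneg (han n)).symm
    have hbc : T μ y * T (μ + 2) y
        = ∑' n, ∑ kl ∈ Finset.HasAntidiagonal.antidiagonal n, b kl.1 * c kl.2 :=
      tsum_mul_tsum_eq_tsum_sum_antidiagonal_of_summable_norm hbs hcs
    have haa : T (μ + 1) y ^ 2
        = ∑' n, ∑ kl ∈ Finset.HasAntidiagonal.antidiagonal n, a kl.1 * a kl.2 := by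
      rw [sq]
      exact tsum_mul_tsum_eq_tsum_sum_antidiagonal_of_summable_norm has has
    rw [hbc, haa]
    -- strict comparison of coefficients
    have hlt : ∀ n : ℕ, (∑ kl ∈ Finset.HasAntidiagonal.antidiagonal n, b kl.1 * c kl.2)
        < ∑ kl ∈ Finset.HasAntidiagonal.antidiagonal n, a kl.1 * a kl.2 := by
      intro n
      rw [Finset.Nat.sum_antidiagonal_eq_sum_range_succ_mk, Finset.Nat.sum_antidiagonal_eq_sum_range_succ_mk]
      have h1 := cauchy_coeff_eq hμ (show (0:ℝ) < μ + 2 by linarith) hy.le n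
      have h2 := cauchy_coeff_eq (show (0:ℝ) < μ + 1 by linarith)
        (show (0:ℝ) < μ + 1 by linarith) hy.le n
      have harg1 : 2 * (n : ℝ) + μ + (μ + 2) - 2 = 2 * (n : ℝ) + 2 * μ := by ring
      have harg2 : 2 * (n : ℝ) + (μ + 1) + (μ + 1) - 2 = 2 * (n : ℝ) + 2 * μ := by ring
      rw [harg1] at h1
      rw [harg2] at h2
      rw [hb_def, hc_def, ha_def]
      simp only
      rw [h1, h2]
      have hff : 0 < ff (2 * (n : ℝ) + 2 * μ) n := by
        apply ff_pos
        intro j hj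
        have : (j : ℝ) < n := by exact_mod_cast hj
        linarith
      have hnμ : (0:ℝ) < (n : ℝ) + μ := by positivity
      have hG : 0 < Real.Gamma ((n : ℝ) + μ) := Real.Gamma_pos_of_pos hnμ
      have hG1 : Real.Gamma ((n : ℝ) + (μ + 1)) = ((n : ℝ) + μ) * Real.Gamma ((n : ℝ) + μ) := by
        have : (n : ℝ) + (μ + 1) = ((n : ℝ) + μ) + 1 := by ring
        rw [this, Real.Gamma_add_one hnμ.ne']
      have hG2 : Real.Gamma ((n : ℝ) + (μ + 2))
          = ((n : ℝ) + μ + 1) * (((n : ℝ) + μ) * Real.Gamma ((n : ℝ) + μ)) := by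
        have h' : (n : ℝ) + (μ + 2) = (((n : ℝ) + μ) + 1) + 1 := by ring
        rw [h', Real.Gamma_add_one (by positivity), ← hG1]
        congr 1
        ring
      have hf : (0:ℝ) < (n.factorial : ℝ) := by positivity
      rw [mul_div_assoc', mul_div_assoc']
      apply div_lt_div_of_pos_left (by positivity)
      · positivity
      · rw [hG1, hG2]
        nlinarith [mul_pos hG hG, mul_pos hf (mul_pos hG hG), mul_pos hnμ (mul_pos hf (mul_pos hG hG))]
    have hsummg : Summable fun n => ∑ kl ∈ Finset.HasAntidiagonal.antidiagonal n, a kl.1 * a kl.2 :=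
      (summable_norm_sum_mul_antidiagonal_of_summable_norm has has).of_norm
    exact Summable.tsum_lt_tsum_of_nonneg
      (fun n => Finset.sum_nonneg fun kl _ => mul_nonneg (hbn _) (hcn _))
      (fun n => (hlt n).le) (hlt 0) hsummg
  calc (x / 2) ^ (μ - 1) * T μ y * ((x / 2) ^ (μ + 1) * T (μ + 2) y)
      = ((x / 2) ^ μ) ^ 2 * (T μ y * T (μ + 2) y) := by rw [← hpow]; ring
    _ < ((x / 2) ^ μ) ^ 2 * (T (μ + 1) y ^ 2) := by
        apply mul_lt_mul_of_pos_left hmain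
        positivity
    _ = ((x / 2) ^ μ * T (μ + 1) y) ^ 2 := by ring

end TuranBesselAux

end TuranAuxSection

open TuranBesselAux in
theorem turan_besselI_upper_two_over (ν : ℝ) (hν : 0 ≤ ν) (x : ℝ) (hx : 0 < x) :
    besselI ν x ^ 2 - besselI (ν - 1) x * besselI (ν + 1) x <
      2 / (x + ν) * besselI ν x ^ 2 := by
  have hB : 0 < besselI ν x := besselI_pos hν hx
  have hC : 0 < besselI (ν + 1) x := besselI_pos (by linarith) hx
  set A := besselI (ν - 1) x with hA_def
  set B := besselI ν x with hB_def
  set C := besselI (ν + 1) x with hC_def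
  set D := besselI (ν + 1 + 1) x with hD_def
  have e1 : ν + 1 - 1 = ν := by ring
  have R1 : A = C + 2 * ν / x * B := besselI_rec hν hx
  have R2 : B = D + 2 * (ν + 1) / x * C := by
    have := besselI_rec (ν := ν + 1) (by linarith) hx
    rwa [e1] at this
  have T2 : B * D < C ^ 2 := by
    have := turan_strict (μ := ν + 1) (by linarith) hx
    rwa [e1] at this
  have hE2 : x * B ^ 2 - x * C ^ 2 < 2 * (ν + 1) * B * C := by
    have h1 : x * (B * D) < x * C ^ 2 := by
      exact (mul_lt_mul_of_pos_left T2 hx)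
    have h2 : x * (B * D) = x * B ^ 2 - 2 * (ν + 1) * B * C := by
      rw [R2]; field_simp; ring
    linarith
  rcases eq_or_lt_of_le hν with h0 | hν'
  · -- case ν = 0
    have hν0 : ν = 0 := h0.symm
    subst hν0
    have hA : A = C := by rw [R1]; simp
    rw [hA]
    have hxν : (0:ℝ) < x + 0 := by linarith
    rw [div_mul_eq_mul_div, lt_div_iff₀ hxν]
    by_cases hCB : C < B
    · have h3 : 2 * B * C < 2 * B * B := by
        apply mul_lt_mul_of_pos_left hCB
        linarith
      nlinarith [hE2]
    · push_neg at hCB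
      have h4 : B ^ 2 - C ^ 2 ≤ 0 := by nlinarith
      nlinarith [mul_pos hB hB]
  · -- case ν > 0
    have T1 : A * C < B ^ 2 := turan_strict hν' hx
    have hAC : x * (A * C) = x * C ^ 2 + 2 * ν * B * C := by
      rw [R1]; field_simp
    have hE1 : 2 * ν * B * C < x * B ^ 2 - x * C ^ 2 := by
      have h1 : x * (A * C) < x * B ^ 2 := mul_lt_mul_of_pos_left T1 hx
      linarith
    have hBC : C < B := by
      have hp : 0 < x * B ^ 2 - x * C ^ 2 := by
        nlinarith [mul_nonneg (mul_nonneg (mul_nonneg (by norm_num : (0:ℝ) ≤ 2) hν'.le) hB.le) hC.le]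
      have hq : C ^ 2 < B ^ 2 := by nlinarith
      nlinarith [mul_pos (add_pos hB hC) hC]
    have hxB : (x + ν) * C < x * B := by
      nlinarith [hE1, mul_nonneg (mul_nonneg hν'.le hC.le) (sub_nonneg.mpr hBC.le),
        add_pos hB hC]
    have hxν : (0:ℝ) < x + ν := by linarith
    rw [div_mul_eq_mul_div, lt_div_iff₀ hxν]
    have key : x * (B ^ 2 - A * C) < 2 * B * C := by nlinarith [hAC, hE2]
    have step1 : x * (B ^ 2 - A * C) * (x + ν) < 2 * B * C * (x + ν) :=
      mul_lt_mul_of_pos_right key hxν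
    have step2 : 2 * B * C * (x + ν) < 2 * B * (x * B) := by
      have : 2 * B * ((x + ν) * C) < 2 * B * (x * B) :=
        mul_lt_mul_of_pos_left hxB (by linarith)
      linarith [this]
    have h : x * ((B ^ 2 - A * C) * (x + ν)) < x * (2 * B ^ 2) := by
      have e1' : x * ((B ^ 2 - A * C) * (x + ν)) = x * (B ^ 2 - A * C) * (x + ν) := by ring
      have e2' : x * (2 * B ^ 2) = 2 * B * (x * B) := by ring
      rw [e1', e2']
      exact step1.trans step2
    exact lt_of_mul_lt_mul_left h hx.le
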